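/- arXiv:math/0107021 — 7 statements merged into one kernel-verified Lean document; each statement's English description precedes it below -/
import Mathlib

section
/- Let X be a quandle, A an abelian group (written multiplicatively), and φ : X × X → A a function satisfying the quandle 2-cocycle conditions: φ(x,x)=1 for all x, and φ(x₁,x₂)φ(x₁*x₂,x₃) = φ(x₁,x₃)φ(x₁*x₃, x₂*x₃) for all x₁,x₂,x₃. Then the set A × X with operation (a₁,x₁)*(a₂,x₂) = (a₁·φ(x₁,x₂), x₁*x₂) is a quandle. -/
/-- the abelian extension E(X,A,φ) = A × X of a quandle X by a 2-cocycle φ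
is a quandle. -/
theorem abelian_extension_is_quandle {X A : Type*} [CommGroup A]
    (op : X → X → X)
    (hidem : ∀ a, op a a = a)
    (hbij : ∀ b, Function.Bijective (fun x => op x b))
    (hdist : ∀ a b c, op (op a b) c = op (op a c) (op b c))
    (φ : X → X → A)
    (hφ1 : ∀ x, φ x x = 1)
    (hφ2 : ∀ x₁ x₂ x₃, φ x₁ x₂ * φ (op x₁ x₂) x₃ = φ x₁ x₃ * φ (op x₁ x₃) (op x₂ x₃)) :
    let eop : A × X → A × X → A × X := fun u v => (u.1 * φ u.2 v.2, op u.2 v.2)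
    (∀ u : A × X, eop u u = u) ∧
    (∀ v : A × X, Function.Bijective (fun u : A × X => eop u v)) ∧
    (∀ u v w : A × X, eop (eop u v) w = eop (eop u w) (eop v w)) := by
  intro eop
  refine ⟨?_, ?_, ?_⟩
  · intro u
    simp [eop, hφ1, hidem]
  · intro v
    constructor
    · rintro ⟨a, x⟩ ⟨b, y⟩ h
      simp only [eop, Prod.mk.injEq] at h
      obtain ⟨h1, h2⟩ := h
      have hx : x = y := (hbij v.2).1 h2
      subst hx
      have : a = b := mul_right_cancel h1
      simp [this]
    · rintro ⟨a, x⟩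
      obtain ⟨y, hy⟩ := (hbij v.2).2 x
      exact ⟨(a * (φ y v.2)⁻¹, y), by simp [eop, hy, mul_assoc]⟩
  · intro u v w
    simp only [eop, Prod.mk.injEq]
    refine ⟨?_, hdist _ _ _⟩
    rw [mul_assoc, mul_assoc, hφ2]
end

section
/- Let q, m be positive integers and let E = Z/q^{m+1} with quandle operation A*B = (1-q)A + qB mod q^{m+1}, and X = Z/q^m with the analogous operation A*B = (1-q)A + qB mod q^m. Write elements of E in q-ary expansion A = A_m q^m + ... + A_1 q + A_0 with 0 ≤ A_j < q. Then the map f : E → Z/q × X defined by f(A) = (A_m mod q, A mod q^m) is a bijection, and there is a function φ : X × X → Z/q (namely φ(X,Y) = (s(X)*s(Y) - s(X*Y))/q^m where s : Z/q^m → Z/q^{m+1} is the section sending a residue in {0,...,q^m - 1} to itself) such that f(A*B) = (A_m + φ(A mod q^m, B mod q^m), (A mod q^m)*(B mod q^m)) for all A,B ∈ E. -/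
/-- The Alexander quandle operation a*b = Ta + (1-T)b on Z/n where T acts by 1-q,
i.e. a*b = (1-q)a + qb. -/
def dop (q : ℕ) {n : ℕ} (a b : ZMod n) : ZMod n :=
  (1 - (q : ZMod n)) * a + (q : ZMod n) * b

/-- The set-theoretic section Z/q^m → Z/q^{m+1} sending a residue in {0,…,q^m-1} to itself. -/
def sec (q m : ℕ) (x : ZMod (q ^ m)) : ZMod (q ^ (m + 1)) := (x.val : ZMod (q ^ (m + 1)))

/-- Reduction Z/q^{m+1} → Z/q^m. -/
def red (q m : ℕ) (a : ZMod (q ^ (m + 1))) : ZMod (q ^ m) := (a.val : ZMod (q ^ m))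

/-- The top q-ary digit A_m of A ∈ Z/q^{m+1}. -/
def topc (q m : ℕ) (a : ZMod (q ^ (m + 1))) : ZMod q := ((a.val / q ^ m : ℕ) : ZMod q)

/-- The cocycle φ(X,Y) = (s(X)*s(Y) - s(X*Y))/q^m. -/
def phiExt (q m : ℕ) (x y : ZMod (q ^ m)) : ZMod q :=
  (((dop q (sec q m x) (sec q m y) - sec q m (dop q x y)).val / q ^ m : ℕ) : ZMod q)

namespace ExtAux

variable {q m : ℕ}

lemma red_eq_castHom (hq : 0 < q) (a : ZMod (q ^ (m + 1))) :
    red q m a = ZMod.castHom (pow_dvd_pow q (Nat.le_succ m)) (ZMod (q ^ m)) a := by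
  haveI : NeZero (q ^ (m + 1)) := ⟨pow_ne_zero _ hq.ne'⟩
  rw [red, ZMod.natCast_val, ZMod.castHom_apply]

lemma red_dop (hq : 0 < q) (A B : ZMod (q ^ (m + 1))) :
    red q m (dop q A B) = dop q (red q m A) (red q m B) := by
  simp only [red_eq_castHom hq, dop, map_add, map_mul, map_sub, map_one, map_natCast]

lemma red_sec (hq : 0 < q) (x : ZMod (q ^ m)) : red q m (sec q m x) = x := by
  haveI : NeZero (q ^ m) := ⟨pow_ne_zero _ hq.ne'⟩
  have hlt : x.val < q ^ (m + 1) :=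
    lt_of_lt_of_le (ZMod.val_lt x) (Nat.pow_le_pow_right hq (Nat.le_succ m))
  rw [red, sec, ZMod.val_natCast, Nat.mod_eq_of_lt hlt, ZMod.natCast_val, ZMod.cast_id]

lemma decomp (hq : 0 < q) (a : ZMod (q ^ (m + 1))) :
    a = sec q m (red q m a) + ((a.val / q ^ m : ℕ) : ZMod (q ^ (m + 1))) * ((q ^ m : ℕ) : ZMod (q ^ (m + 1))) := by
  haveI : NeZero (q ^ (m + 1)) := ⟨pow_ne_zero _ hq.ne'⟩
  have h1 : sec q m (red q m a) = ((a.val % q ^ m : ℕ) : ZMod (q ^ (m + 1))) := by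
    rw [sec, red, ZMod.val_natCast]
  rw [h1, ← Nat.cast_mul, ← Nat.cast_add, Nat.mod_add_div', ZMod.natCast_val, ZMod.cast_id]

lemma topc_dop (hq : 0 < q) (A B : ZMod (q ^ (m + 1))) :
    topc q m (dop q A B) = topc q m A + phiExt q m (red q m A) (red q m B) := by
  haveI hN : NeZero (q ^ (m + 1)) := ⟨pow_ne_zero _ hq.ne'⟩
  haveI hM : NeZero (q ^ m) := ⟨pow_ne_zero _ hq.ne'⟩
  have hMpos : 0 < q ^ m := pow_pos hq m
  set x := red q m A with hx
  set y := red q m B with hy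
  set D := dop q (sec q m x) (sec q m y) - sec q m (dop q x y) with hD
  set t := A.val / q ^ m with ht
  set d := D.val / q ^ m with hd
  -- q^m divides D.val
  have hredD : red q m D = 0 := by
    have h2 : red q m D = red q m (dop q (sec q m x) (sec q m y)) - red q m (sec q m (dop q x y)) := by
      simp only [red_eq_castHom hq, hD, map_sub]
    rw [h2, red_dop hq, red_sec hq, red_sec hq, red_sec hq, sub_self]
  have hdvd : q ^ m ∣ D.val := by
    rwa [red, ZMod.natCast_eq_zero_iff] at hredD
  have hDval : D.val = d * q ^ m := by
    rw [hd, Nat.div_mul_cancel hdvd]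
  have hqMN : q * q ^ m = q ^ (m + 1) := by rw [pow_succ]; ring
  -- q * q^m = 0 in ZMod (q^(m+1))
  have hqM : (q : ZMod (q ^ (m + 1))) * ((q ^ m : ℕ) : ZMod (q ^ (m + 1))) = 0 := by
    rw [← Nat.cast_mul, hqMN, ZMod.natCast_self]
  -- key identity
  have hkey : dop q A B = sec q m (dop q x y) + (((d + t) * q ^ m : ℕ) : ZMod (q ^ (m + 1))) := by
    have hA := decomp hq A
    have hB := decomp hq B
    set s := B.val / q ^ m with hs
    have step1 : dop q A B = dop q (sec q m x) (sec q m y)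
        + (t : ZMod (q ^ (m + 1))) * ((q ^ m : ℕ) : ZMod (q ^ (m + 1)))
        + ((s : ZMod (q ^ (m + 1))) - (t : ZMod (q ^ (m + 1))))
          * ((q : ZMod (q ^ (m + 1))) * ((q ^ m : ℕ) : ZMod (q ^ (m + 1)))) := by
      rw [hA, hB]
      simp only [dop]
      ring
    rw [step1, hqM, mul_zero, add_zero]
    have hDsplit : dop q (sec q m x) (sec q m y) = sec q m (dop q x y) + D := by
      rw [hD]; ring
    rw [hDsplit]
    have hDcast : D = ((d * q ^ m : ℕ) : ZMod (q ^ (m + 1))) := by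
      rw [← hDval, ZMod.natCast_val, ZMod.cast_id]
    rw [hDcast]
    push_cast
    ring
  -- val computation
  set c := (dop q x y).val with hc
  have hcM : c < q ^ m := ZMod.val_lt _
  have hMN : q ^ m ≤ q ^ (m + 1) := Nat.pow_le_pow_right hq (Nat.le_succ m)
  have hsecval : (sec q m (dop q x y)).val = c := by
    rw [sec, ZMod.val_natCast, Nat.mod_eq_of_lt (lt_of_lt_of_le hcM hMN)]
  have hk : ((((d + t) * q ^ m : ℕ)) : ZMod (q ^ (m + 1))).val = ((d + t) % q) * q ^ m := by
    rw [ZMod.val_natCast, ← hqMN, Nat.mul_mod_mul_right]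
  have hmodlt : (d + t) % q < q := Nat.mod_lt _ hq
  have hsum : c + ((d + t) % q) * q ^ m < q ^ (m + 1) := by
    calc c + ((d + t) % q) * q ^ m < q ^ m + ((d + t) % q) * q ^ m := by omega
      _ = (((d + t) % q) + 1) * q ^ m := by ring
      _ ≤ q * q ^ m := Nat.mul_le_mul_right (q ^ m) (by omega)
      _ = q ^ (m + 1) := hqMN
  have hvaladd : (dop q A B).val = c + ((d + t) % q) * q ^ m := by
    rw [hkey, ZMod.val_add_of_lt (by rw [hsecval, hk]; exact hsum), hsecval, hk]
  have hdiv : (c + ((d + t) % q) * q ^ m) / q ^ m = (d + t) % q := by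
    rw [Nat.add_mul_div_right _ _ hMpos, Nat.div_eq_of_lt hcM, zero_add]
  have htopcA : topc q m A = (t : ZMod q) := rfl
  have hphi : phiExt q m x y = (d : ZMod q) := rfl
  rw [topc, hvaladd, hdiv, htopcA, hphi, ZMod.natCast_mod]
  push_cast
  ring

end ExtAux

/-- Z/q^{m+1} with a*b = (1-q)a+qb is the abelian extension of Z/q^m by φ:
the map f(A) = (A_m, A mod q^m) is a bijection and f(A*B) = (A_m + φ(Ā,B̄), Ā*B̄). -/
theorem extension_Zq_power (q m : ℕ) (hq : 0 < q) (hm : 0 < m) :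
    Function.Bijective (fun A : ZMod (q ^ (m + 1)) => (topc q m A, red q m A)) ∧
    (∀ A B : ZMod (q ^ (m + 1)),
      (topc q m (dop q A B), red q m (dop q A B)) =
        (topc q m A + phiExt q m (red q m A) (red q m B),
          dop q (red q m A) (red q m B))) := by
  haveI hN : NeZero (q ^ (m + 1)) := ⟨pow_ne_zero _ hq.ne'⟩
  haveI hM : NeZero (q ^ m) := ⟨pow_ne_zero _ hq.ne'⟩
  haveI hq' : NeZero q := ⟨hq.ne'⟩
  have hMpos : 0 < q ^ m := pow_pos hq m
  constructor
  · rw [Fintype.bijective_iff_injective_and_card]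
    constructor
    · intro A A' h
      simp only [Prod.mk.injEq] at h
      obtain ⟨h1, h2⟩ := h
      have hlt : ∀ C : ZMod (q ^ (m + 1)), C.val / q ^ m < q := by
        intro C
        rw [Nat.div_lt_iff_lt_mul hMpos]
        have := ZMod.val_lt C
        have hpow : q ^ (m + 1) = q * q ^ m := by rw [pow_succ]; ring
        omega
      have h1' : A.val / q ^ m = A'.val / q ^ m := by
        have := congrArg ZMod.val h1
        rwa [topc, topc, ZMod.val_natCast, ZMod.val_natCast,
          Nat.mod_eq_of_lt (hlt A), Nat.mod_eq_of_lt (hlt A')] at this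
      have h2' : A.val % q ^ m = A'.val % q ^ m := by
        have := congrArg ZMod.val h2
        rwa [red, red, ZMod.val_natCast, ZMod.val_natCast] at this
      have hv : A.val = A'.val := by
        have hA := Nat.div_add_mod A.val (q ^ m)
        have hA' := Nat.div_add_mod A'.val (q ^ m)
        rw [h1', h2'] at hA
        omega
      exact ZMod.val_injective _ hv
    · simp only [Fintype.card_prod, ZMod.card]
      rw [pow_succ]; ring
  · intro A B
    simp only [Prod.mk.injEq]
    exact ⟨ExtAux.topc_dop hq A B, ExtAux.red_dop hq A B⟩
end

section
/- Let q, m be positive integers, X = Z_{q^m}[T,T^{-1}]/(T-1+q) (i.e. Z/q^m with quandle operation a*b = (1-q)a + qb), and s : Z/q^m → Z/q^{m+1} the set-theoretic section sending the residue class of an integer in {0,...,q^m-1} to its class mod q^{m+1}. Then for all x,y ∈ X, the integer s(x)*s(y) - s(x*y) (computed in Z/q^{m+1}, where * on Z/q^{m+1} is a*b=(1-q)a+qb) is divisible by q^m, and the resulting function φ(x,y) = (s(x)*s(y) - s(x*y))/q^m mod q defines a quandle 2-cocycle of X with values in Z/q. -/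
/-- The integer defect, divided exactly by q^m. -/
def cInt (q m : ℕ) (x y : ZMod (q ^ m)) : ℤ :=
  ((1 - (q : ℤ)) * x.val + q * y.val - ((dop q x y).val : ℤ)) / (q : ℤ) ^ m

lemma dvd_defect (q m : ℕ) (hq : 0 < q) (x y : ZMod (q ^ m)) :
    (q : ℤ) ^ m ∣ (1 - (q : ℤ)) * x.val + q * y.val - ((dop q x y).val : ℤ) := by
  haveI : NeZero (q ^ m) := ⟨(pow_pos hq m).ne'⟩
  have h : (((q : ℤ) ^ m : ℤ) : ℤ) = ((q ^ m : ℕ) : ℤ) := by push_cast; ring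
  rw [h, ← ZMod.intCast_zmod_eq_zero_iff_dvd]
  push_cast
  simp only [ZMod.natCast_val, ZMod.cast_id]
  simp [dop]
  try ring

lemma mul_cInt (q m : ℕ) (hq : 0 < q) (x y : ZMod (q ^ m)) :
    (q : ℤ) ^ m * cInt q m x y
      = (1 - (q : ℤ)) * x.val + q * y.val - ((dop q x y).val : ℤ) :=
  Int.mul_ediv_cancel' (dvd_defect q m hq x y)

lemma defect_eq (q m : ℕ) (hq : 0 < q) (x y : ZMod (q ^ m)) :
    dop q (sec q m x) (sec q m y) - sec q m (dop q x y)
      = (((q : ℤ) ^ m * cInt q m x y : ℤ) : ZMod (q ^ (m + 1))) := by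
  rw [mul_cInt q m hq]
  simp [dop, sec]
  try push_cast
  try ring

lemma val_defect (q m : ℕ) (hq : 0 < q) (x y : ZMod (q ^ m)) :
    (dop q (sec q m x) (sec q m y) - sec q m (dop q x y)).val
      = q ^ m * (cInt q m x y % q).toNat := by
  haveI : NeZero (q ^ (m + 1)) := ⟨(pow_pos hq (m + 1)).ne'⟩
  have hN : (0 : ℤ) < (q : ℤ) ^ m := by positivity
  have hq' : (0 : ℤ) < (q : ℤ) := by exact_mod_cast hq
  have h1 : ((dop q (sec q m x) (sec q m y) - sec q m (dop q x y)).val : ℤ)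
      = ((q : ℤ) ^ m * cInt q m x y) % ((q : ℤ) ^ (m + 1)) := by
    rw [defect_eq q m hq, ZMod.val_intCast]
    push_cast; ring_nf
  have h2 : ((q : ℤ) ^ m * cInt q m x y) % ((q : ℤ) ^ (m + 1))
      = (q : ℤ) ^ m * (cInt q m x y % q) := by
    rw [pow_succ]
    exact Int.mul_emod_mul_of_pos _ _ hN
  have h3 : (0 : ℤ) ≤ cInt q m x y % q := Int.emod_nonneg _ hq'.ne'
  have h4 : ((dop q (sec q m x) (sec q m y) - sec q m (dop q x y)).val : ℤ)
      = ((q ^ m * (cInt q m x y % q).toNat : ℕ) : ℤ) := by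
    rw [h1, h2]; push_cast [Int.toNat_of_nonneg h3]; ring
  exact_mod_cast h4

lemma phiExt_eq (q m : ℕ) (hq : 0 < q) (x y : ZMod (q ^ m)) :
    phiExt q m x y = ((cInt q m x y : ℤ) : ZMod q) := by
  rw [phiExt, val_defect q m hq, Nat.mul_div_cancel_left _ (pow_pos hq m)]
  have h3 : (0 : ℤ) ≤ cInt q m x y % q :=
    Int.emod_nonneg _ (by exact_mod_cast hq.ne')
  have : (((cInt q m x y % q).toNat : ℤ) : ZMod q) = ((cInt q m x y : ℤ) : ZMod q) := by
    rw [Int.toNat_of_nonneg h3, ZMod.intCast_mod]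
  exact_mod_cast this

lemma selfdist (q m : ℕ) (x₁ x₂ x₃ : ZMod (q ^ m)) :
    dop q (dop q x₁ x₂) x₃ = dop q (dop q x₁ x₃) (dop q x₂ x₃) := by
  simp [dop]; ring

/-- s(x)*s(y) - s(x*y) is divisible by q^m, and the resulting function φ
is a quandle 2-cocycle of Z/q^m (with operation a*b = (1-q)a+qb) valued in Z/q. -/
theorem section_defect_cocycle (q m : ℕ) (hq : 0 < q) (hm : 0 < m) :
    (∀ x y : ZMod (q ^ m),
      q ^ m ∣ (dop q (sec q m x) (sec q m y) - sec q m (dop q x y)).val) ∧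
    (∀ x : ZMod (q ^ m), phiExt q m x x = 0) ∧
    (∀ x₁ x₂ x₃ : ZMod (q ^ m),
      phiExt q m x₁ x₂ + phiExt q m (dop q x₁ x₂) x₃ =
        phiExt q m x₁ x₃ + phiExt q m (dop q x₁ x₃) (dop q x₂ x₃)) := by
  refine ⟨fun x y => ?_, fun x => ?_, fun x₁ x₂ x₃ => ?_⟩
  · rw [val_defect q m hq]
    exact Dvd.intro _ rfl
  · -- diagonal
    rw [phiExt_eq q m hq]
    have hxx : dop q x x = x := by simp [dop]; ring
    have h0 : cInt q m x x = 0 := by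
      have := mul_cInt q m hq x x
      rw [hxx] at this
      have hE : (1 - (q : ℤ)) * x.val + q * x.val - (x.val : ℤ) = 0 := by ring
      rw [hE] at this
      have hN : ((q : ℤ) ^ m) ≠ 0 := by positivity
      exact (mul_eq_zero.mp this).resolve_left hN
    rw [h0]; simp
  · -- cocycle condition
    have hN : ((q : ℤ) ^ m) ≠ 0 := by positivity
    have hkey : (q : ℤ) ∣
        (cInt q m x₁ x₂ + cInt q m (dop q x₁ x₂) x₃)
          - (cInt q m x₁ x₃ + cInt q m (dop q x₁ x₃) (dop q x₂ x₃)) := by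
      have hmul : ((q : ℤ) ^ m) * ((cInt q m x₁ x₂ + cInt q m (dop q x₁ x₂) x₃)
          - (cInt q m x₁ x₃ + cInt q m (dop q x₁ x₃) (dop q x₂ x₃)))
          = (q : ℤ) * ((x₂.val : ℤ) - ((dop q x₁ x₂).val : ℤ)
              + ((dop q x₁ x₃).val : ℤ) - ((dop q x₂ x₃).val : ℤ)) := by
        have e1 := mul_cInt q m hq x₁ x₂
        have e2 := mul_cInt q m hq (dop q x₁ x₂) x₃
        have e3 := mul_cInt q m hq x₁ x₃
        have e4 := mul_cInt q m hq (dop q x₁ x₃) (dop q x₂ x₃)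
        have hsd : ((dop q (dop q x₁ x₂) x₃).val : ℤ)
            = ((dop q (dop q x₁ x₃) (dop q x₂ x₃)).val : ℤ) := by
          rw [selfdist]
        linear_combination e1 + e2 - e3 - e4 - hsd
      have hdvd2 : ((q : ℤ) ^ m) ∣ ((x₂.val : ℤ) - ((dop q x₁ x₂).val : ℤ)
          + ((dop q x₁ x₃).val : ℤ) - ((dop q x₂ x₃).val : ℤ)) := by
        haveI : NeZero (q ^ m) := ⟨(pow_pos hq m).ne'⟩
        have h : ((q : ℤ) ^ m : ℤ) = ((q ^ m : ℕ) : ℤ) := by push_cast; ring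
        rw [h, ← ZMod.intCast_zmod_eq_zero_iff_dvd]
        push_cast
        simp only [ZMod.natCast_val, ZMod.cast_id]
        simp [dop]
        ring
      obtain ⟨k, hk⟩ := hdvd2
      refine ⟨k, ?_⟩
      have : ((q : ℤ) ^ m) * ((cInt q m x₁ x₂ + cInt q m (dop q x₁ x₂) x₃)
          - (cInt q m x₁ x₃ + cInt q m (dop q x₁ x₃) (dop q x₂ x₃)))
          = ((q : ℤ) ^ m) * ((q : ℤ) * k) := by
        rw [hmul, hk]; ring
      exact mul_left_cancel₀ hN this
    rw [phiExt_eq q m hq, phiExt_eq q m hq, phiExt_eq q m hq, phiExt_eq q m hq]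
    rw [← Int.cast_add, ← Int.cast_add, ZMod.intCast_eq_intCast_iff]
    exact (Int.modEq_iff_dvd.mpr hkey).symm
end

section
/- Let q, m be positive integers, E = Z_q[T,T^{-1}]/((1-T)^{m+1}) and X = Z_q[T,T^{-1}]/((1-T)^m) with Alexander quandle operation a*b = T a + (1-T) b. Writing elements of E uniquely as A = Σ_{j=0}^{m} A_j (1-T)^j with A_j ∈ Z/q, the map f : E → Z/q × X, f(A) = (A_m, A mod (1-T)^m) satisfies f(A*B) = (A_m + φ(Ā, B̄), Ā * B̄) where Ā, B̄ denote reductions mod (1-T)^m and φ(Ā, B̄) = B_{m-1} - A_{m-1}. In particular φ is a quandle 2-cocycle of X with values in Z/q and E is isomorphic to the abelian extension E(X, Z/q, φ). -/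
/-- Multiplication by T = 1 - (1-T) on Z_q[T,T⁻¹]/((1-T)^m), in coordinates with respect to
the basis (1-T)^j, j = 0,…,m-1: (TA)_j = A_j - A_{j-1}. -/
def mulT (q m : ℕ) (A : Fin m → ZMod q) : Fin m → ZMod q :=
  fun j => A j - (if h : 0 < (j : ℕ) then A ⟨(j : ℕ) - 1, by omega⟩ else 0)

/-- The Alexander quandle operation a*b = Ta + (1-T)b on Z_q[T,T⁻¹]/((1-T)^m), in
coordinates. -/
def aop (q m : ℕ) (A B : Fin m → ZMod q) : Fin m → ZMod q :=
  fun j => mulT q m A j + (B j - mulT q m B j)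

/-- Reduction mod (1-T)^m : keep the coefficients of (1-T)^j for j < m. -/
def redA (q m : ℕ) (A : Fin (m + 1) → ZMod q) : Fin m → ZMod q :=
  fun j => A j.castSucc

/-- The cocycle φ(Ā,B̄) = B_{m-1} - A_{m-1}. -/
def phiA (q m : ℕ) (hm : 0 < m) (A B : Fin m → ZMod q) : ZMod q :=
  B ⟨m - 1, by omega⟩ - A ⟨m - 1, by omega⟩

/-- Z_q[T,T⁻¹]/((1-T)^{m+1}) is the abelian extension of
Z_q[T,T⁻¹]/((1-T)^m) by the 2-cocycle φ(Ā,B̄) = B_{m-1} - A_{m-1}: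
the map f(A) = (A_m, Ā) is a bijection satisfying f(A*B) = (A_m + φ(Ā,B̄), Ā*B̄),
and φ is a quandle 2-cocycle. -/
theorem extension_one_minus_T (q m : ℕ) (hq : 0 < q) (hm : 0 < m) :
    Function.Bijective
      (fun A : Fin (m + 1) → ZMod q => (A (Fin.last m), redA q m A)) ∧
    (∀ A B : Fin (m + 1) → ZMod q,
      (aop q (m + 1) A B (Fin.last m), redA q m (aop q (m + 1) A B)) =
        (A (Fin.last m) + phiA q m hm (redA q m A) (redA q m B),
          aop q m (redA q m A) (redA q m B))) ∧
    (∀ x : Fin m → ZMod q, phiA q m hm x x = 0) ∧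
    (∀ x₁ x₂ x₃ : Fin m → ZMod q,
      phiA q m hm x₁ x₂ + phiA q m hm (aop q m x₁ x₂) x₃ =
        phiA q m hm x₁ x₃ + phiA q m hm (aop q m x₁ x₃) (aop q m x₂ x₃)) := by
  have hred : ∀ (A : Fin (m+1) → ZMod q) (j : Fin m),
      mulT q (m+1) A j.castSucc = mulT q m (redA q m A) j := by
    intro A j
    simp only [mulT, redA, Fin.coe_castSucc]
    split_ifs with h
    · congr 2
    · rfl
  refine ⟨?_, ?_, ?_, ?_⟩
  · apply Function.bijective_iff_has_inverse.mpr
    refine ⟨fun p => Fin.snoc p.2 p.1, fun A => ?_, fun p => ?_⟩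
    · funext j
      refine Fin.lastCases ?_ (fun i => ?_) j
      · simp
      · simp [redA]
    · ext j
      · simp
      · simp [redA]
  · intro A B
    have hlast : (Fin.last m : ℕ) = m := rfl
    refine Prod.ext ?_ ?_
    · simp only [aop, mulT, phiA, redA, hlast]
      rw [dif_pos hm, dif_pos hm]
      have : ((⟨m - 1, by omega⟩ : Fin m).castSucc) = (⟨m - 1, by omega⟩ : Fin (m+1)) := by
        ext; rfl
      simp only [this]
      ring
    · funext j
      simp only [aop, redA, hred]
  · intro x
    simp [phiA]
  · intro x₁ x₂ x₃
    simp only [phiA, aop, mulT]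
    ring
end

section
/- Let X = Z_q[T,T^{-1}]/((1-T)^m) be the Alexander quandle with a*b = Ta+(1-T)b. Define φ : X × X → Z/q by φ(A,B) = B_{m-1} - A_{m-1}, where A_{m-1}, B_{m-1} are the coefficients of (1-T)^{m-1} in the unique expansions A = Σ_{j=0}^{m-1} A_j (1-T)^j, B = Σ_{j=0}^{m-1} B_j (1-T)^j with A_j, B_j ∈ Z/q. Then φ is a quandle 2-cocycle: φ(x,x) = 0 for all x, and φ(x₁,x₂) + φ(x₁*x₂, x₃) = φ(x₁,x₃) + φ(x₁*x₃, x₂*x₃) for all x₁,x₂,x₃ ∈ X. -/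
/-- φ(A,B) = B_{m-1} - A_{m-1} is a quandle 2-cocycle of the Alexander
quandle Z_q[T,T⁻¹]/((1-T)^m). -/
theorem phi_top_coeff_is_cocycle (q m : ℕ) (hq : 0 < q) (hm : 0 < m) :
    (∀ x : Fin m → ZMod q, phiA q m hm x x = 0) ∧
    (∀ x₁ x₂ x₃ : Fin m → ZMod q,
      phiA q m hm x₁ x₂ + phiA q m hm (aop q m x₁ x₂) x₃ =
        phiA q m hm x₁ x₃ + phiA q m hm (aop q m x₁ x₃) (aop q m x₂ x₃)) := by
  constructor
  · intro x; simp [phiA]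
  · intro x₁ x₂ x₃
    simp only [phiA, aop, mulT]
    ring
end

section
/- Let q ≥ 2, m ≥ 1, X = Z_{q^m}[T,T^{-1}]/(T-1+q) (Z/q^m with a*b=(1-q)a+qb), and φ : X×X → Z/q the 2-cocycle defined by φ(x,y) = (s(x)*s(y) - s(x*y))/q^m where s is the canonical section Z/q^m → Z/q^{m+1}. Then φ evaluated on the 2-cycle c = (0,1) + (q, q^{m-1}+q-1) equals 1 ∈ Z/q; in particular φ is not a coboundary, and hence the extension Z_{q^{m+1}}[T,T^{-1}]/(T-1+q) of X is a non-trivial abelian extension (not isomorphic to the product quandle Z/q × X via a map covering the identity). -/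
lemma sec_zero (q m : ℕ) [NeZero (q ^ m)] : sec q m 0 = 0 := by simp [sec]

lemma dop_zero_one (q n : ℕ) : dop q (0 : ZMod n) 1 = (q : ZMod n) := by simp [dop]

lemma dop_q_z (q m n : ℕ) (hm : 1 ≤ m) :
    dop q ((q : ZMod n)) ((q : ZMod n) ^ (m - 1) + q - 1) = (q : ZMod n) ^ m := by
  have h : m - 1 + 1 = m := by omega
  have : dop q ((q : ZMod n)) ((q : ZMod n) ^ (m - 1) + q - 1) = (q : ZMod n) ^ (m - 1 + 1) := by
    unfold dop; ring
  rw [this, h]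

lemma key_eval (q m : ℕ) (hq : 2 ≤ q) (hm : 1 ≤ m) :
    phiExt q m 0 1
      + phiExt q m (q : ZMod (q ^ m)) ((q : ZMod (q ^ m)) ^ (m - 1) + q - 1) = 1 := by
  have hq0 : 0 < q := by omega
  haveI : NeZero (q ^ m) := ⟨by positivity⟩
  haveI : NeZero (q ^ (m + 1)) := ⟨by positivity⟩
  haveI : Fact (1 < q ^ m) := ⟨by calc 1 < 2 := one_lt_two
                                     _ ≤ q := hq
                                     _ = q ^ 1 := (pow_one q).symm
                                     _ ≤ q ^ m := Nat.pow_le_pow_right hq0 hm⟩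
  haveI : Fact (1 < q ^ (m + 1)) := ⟨by
    calc 1 < q ^ m := Fact.out
         _ ≤ q ^ (m+1) := Nat.pow_le_pow_right hq0 (by omega)⟩
  rcases eq_or_lt_of_le hm with h1 | h2
  · -- m = 1
    subst h1
    have hqz : ((q : ℕ) : ZMod (q ^ 1)) = 0 := by rw [pow_one]; exact ZMod.natCast_self q
    have hz : ((q : ZMod (q ^ 1)) ^ (1 - 1) + q - 1) = 0 := by
      simp [hqz]
    rw [hz, hqz]
    have h2 : phiExt q 1 0 0 = 0 := by
      simp [phiExt, sec_zero, dop, ZMod.val_zero, Nat.zero_div]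
    have h1 : phiExt q 1 0 1 = 1 := by
      have hsec1 : sec q 1 1 = 1 := by rw [sec, ZMod.val_one]; exact Nat.cast_one
      have hd : dop q (0 : ZMod (q^1)) 1 = 0 := by rw [dop_zero_one, hqz]
      rw [phiExt, hsec1, sec_zero, hd, sec_zero, dop_zero_one, sub_zero]
      have : ((q : ZMod (q ^ (1+1)))).val = q := ZMod.val_cast_of_lt (by
        calc q = q ^ 1 := (pow_one q).symm
             _ < q ^ (1+1) := Nat.pow_lt_pow_right (by omega) (by omega))
      rw [this, pow_one, Nat.div_self hq0, Nat.cast_one]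
    rw [h1, h2, add_zero]
  · -- 2 ≤ m
    have hm2 : 2 ≤ m := h2
    have hqlt : q < q ^ m := by
      calc q = q ^ 1 := (pow_one q).symm
           _ < q ^ m := Nat.pow_lt_pow_right (by omega) (by omega)
    have h1 : phiExt q m 0 1 = 0 := by
      have hsec1 : sec q m 1 = 1 := by rw [sec, ZMod.val_one]; exact Nat.cast_one
      have hsecq : sec q m ((q:ℕ) : ZMod (q^m)) = (q : ZMod (q^(m+1))) := by
        rw [sec, ZMod.val_cast_of_lt hqlt]
      rw [phiExt, hsec1, sec_zero, dop_zero_one, dop_zero_one, hsecq, sub_self]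
      simp
    have hzval : ((q:ZMod (q^m))^(m-1) + q - 1) = ((q^(m-1) + q - 1 : ℕ) : ZMod (q^m)) := by
      have : 1 ≤ q^(m-1) + q := le_trans (by omega) (Nat.le_add_left q _)
      push_cast [Nat.cast_sub this]
      ring
    have hzlt : q^(m-1) + q - 1 < q ^ m := by
      have h1 : q ^ (m-1) * 2 ≤ q ^ (m-1) * q := Nat.mul_le_mul_left _ hq
      have h2 : q ^ (m-1) * q = q ^ m := by
        rw [← pow_succ]; congr 1; omega
      have h3 : q ≤ q ^ (m-1) := by
        calc q = q ^ 1 := (pow_one q).symm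
             _ ≤ q ^ (m-1) := Nat.pow_le_pow_right hq0 (by omega)
      omega
    have h2' : phiExt q m ((q:ℕ):ZMod (q^m)) ((q:ZMod (q^m))^(m-1) + q - 1) = 1 := by
      have hsecq : sec q m ((q:ℕ) : ZMod (q^m)) = (q : ZMod (q^(m+1))) := by
        rw [sec, ZMod.val_cast_of_lt hqlt]
      have hsecz : sec q m ((q:ZMod (q^m))^(m-1) + q - 1)
          = (q : ZMod (q^(m+1)))^(m-1) + q - 1 := by
        rw [hzval, sec, ZMod.val_cast_of_lt hzlt]
        have : 1 ≤ q^(m-1) + q := le_trans (by omega) (Nat.le_add_left q _)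
        push_cast [Nat.cast_sub this]
        ring
      have hdz : dop q ((q:ℕ):ZMod (q^m)) ((q:ZMod (q^m))^(m-1) + q - 1) = 0 := by
        rw [dop_q_z q m _ hm, ← Nat.cast_pow, ZMod.natCast_self]
      rw [phiExt, hsecq, hsecz, hdz, sec_zero, sub_zero, dop_q_z q m _ hm]
      rw [← Nat.cast_pow, ZMod.val_cast_of_lt (Nat.pow_lt_pow_right (by omega) (by omega))]
      rw [Nat.div_self (by positivity), Nat.cast_one]
    rw [h1, h2', zero_add]

/-- φ evaluates to 1 on the 2-cycle c = (0,1) + (q, q^{m-1}+q-1); hence φ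
is not a coboundary, and the extension is not equivalent to the product quandle
Z/q × X (product of the trivial quandle on Z/q and X) via a map covering the identity. -/
theorem extension_nontrivial (q m : ℕ) (hq : 2 ≤ q) (hm : 1 ≤ m) :
    (phiExt q m 0 1
        + phiExt q m (q : ZMod (q ^ m)) ((q : ZMod (q ^ m)) ^ (m - 1) + q - 1) = 1) ∧
    (¬ ∃ ψ : ZMod (q ^ m) → ZMod q,
        ∀ x y : ZMod (q ^ m), phiExt q m x y = ψ x - ψ (dop q x y)) ∧
    (¬ ∃ F : ZMod q × ZMod (q ^ m) → ZMod q × ZMod (q ^ m),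
        Function.Bijective F ∧
        (∀ u v : ZMod q × ZMod (q ^ m),
          F (u.1 + phiExt q m u.2 v.2, dop q u.2 v.2) =
            ((F u).1, dop q (F u).2 (F v).2)) ∧
        (∀ u : ZMod q × ZMod (q ^ m), (F u).2 = u.2)) := by
  haveI : Fact (1 < q) := ⟨hq⟩
  have key := key_eval q m hq hm
  have hd1 : dop q (0 : ZMod (q^m)) 1 = ((q:ℕ) : ZMod (q^m)) := dop_zero_one q _
  have hd2 : dop q ((q:ℕ):ZMod (q^m)) ((q:ZMod (q^m))^(m-1) + q - 1) = 0 := by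
    rw [dop_q_z q m _ hm, ← Nat.cast_pow, ZMod.natCast_self]
  refine ⟨key, ?_, ?_⟩
  · rintro ⟨ψ, hψ⟩
    rw [hψ, hψ, hd1, hd2] at key
    have : (0 : ZMod q) = 1 := by linear_combination key
    exact zero_ne_one this
  · rintro ⟨F, hbij, hF, hsec⟩
    have step : ∀ (a : ZMod q) (x y : ZMod (q^m)),
        F (a + phiExt q m x y, dop q x y) = ((F (a, x)).1, dop q x y) := by
      intro a x y
      have h := hF (a, x) (0, y)
      simpa [hsec (a,x), hsec (0,y)] using h
    have e1 := step 0 0 1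
    rw [hd1] at e1
    have e2 := step (0 + phiExt q m 0 1) ((q:ℕ):ZMod (q^m)) ((q:ZMod (q^m))^(m-1) + q - 1)
    rw [hd2] at e2
    have f1 : (F (0 + phiExt q m 0 1, ((q:ℕ):ZMod (q^m)))).1 = (F ((0:ZMod q), 0)).1 :=
      by rw [e1]
    rw [f1] at e2
    have hsum : (0:ZMod q) + phiExt q m 0 1
        + phiExt q m ((q:ℕ):ZMod (q^m)) ((q:ZMod (q^m))^(m-1) + q - 1) = 1 := by
      rw [add_assoc, key]; ring
    rw [hsum] at e2
    have f0 : F ((0:ZMod q), (0:ZMod (q^m))) = ((F ((0:ZMod q), 0)).1, 0) := by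
      have := hsec ((0:ZMod q), (0:ZMod (q^m)))
      exact Prod.ext rfl this
    have : F ((1:ZMod q), 0) = F ((0:ZMod q), 0) := by rw [e2, f0]
    have h10 := hbij.1 this
    have : (1 : ZMod q) = 0 := congrArg Prod.fst h10
    exact one_ne_zero this
end

section
/- For every positive integer n, there exists a quandle 2-cocycle φ ∈ Z²_Q(R_{2n}; Z/2) such that the dihedral quandle R_{4n} is isomorphic to the abelian extension E(R_{2n}, Z/2, φ). -/
/-- for every positive n there is a quandle 2-cocycle
φ ∈ Z²_Q(R_{2n}; Z/2) such that R_{4n} ≅ E(R_{2n}, Z/2, φ). -/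
theorem dihedral_double_extension (n : ℕ) (hn : 0 < n) :
    ∃ φ : ZMod (2 * n) → ZMod (2 * n) → ZMod 2,
      (∀ x : ZMod (2 * n), φ x x = 0) ∧
      (∀ x₁ x₂ x₃ : ZMod (2 * n),
        φ x₁ x₂ + φ (2 * x₂ - x₁) x₃ =
          φ x₁ x₃ + φ (2 * x₃ - x₁) (2 * x₃ - x₂)) ∧
      ∃ f : ZMod (4 * n) → ZMod 2 × ZMod (2 * n),
        Function.Bijective f ∧
        ∀ a b : ZMod (4 * n),
          f (2 * b - a) = ((f a).1 + φ (f a).2 (f b).2, 2 * (f b).2 - (f a).2) := by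
  haveI h2 : NeZero (2 * n) := ⟨by omega⟩
  haveI h4 : NeZero (4 * n) := ⟨by omega⟩
  have hdvd : 2 * n ∣ 4 * n := ⟨2, by ring⟩
  set π : ZMod (4 * n) →+* ZMod (2 * n) := ZMod.castHom hdvd _ with hπ
  set ε : ZMod (4 * n) → ZMod 2 := fun a => if a.val < 2 * n then 0 else 1 with hε
  set c : ZMod (2 * n) → ZMod (4 * n) := fun x => ((x.val : ℕ) : ZMod (4 * n)) with hc
  set k : ZMod (4 * n) := ((2 * n : ℕ) : ZMod (4 * n)) with hk
  have hkv : k.val = 2 * n := ZMod.val_natCast_of_lt (by omega)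
  have hcv : ∀ x : ZMod (2 * n), (c x).val = x.val := by
    intro x
    exact ZMod.val_natCast_of_lt (lt_of_lt_of_le x.val_lt (by omega))
  have hεc : ∀ x : ZMod (2 * n), ε (c x) = 0 := by
    intro x
    simp only [hε, hcv, if_pos x.val_lt]
  have hπc : ∀ x : ZMod (2 * n), π (c x) = x := by
    intro x
    rw [hc]
    simp only [map_natCast]
    rw [ZMod.natCast_val, ZMod.cast_id]
  have hkk : k + k = 0 := by
    rw [hk, ← Nat.cast_add]
    have h44 : 2 * n + 2 * n = 4 * n := by ring
    rw [h44, ZMod.natCast_self]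
  have hnegk : -k = k := neg_eq_of_add_eq_zero_left hkk
  have hflip : ∀ a : ZMod (4 * n), ε (a + k) = ε a + 1 := by
    intro a
    have hav := a.val_lt
    have h : (a + k).val = (a.val + 2 * n) % (4 * n) := by rw [ZMod.val_add, hkv]
    simp only [hε]
    by_cases hlt : a.val < 2 * n
    · have h' : (a + k).val = a.val + 2 * n := by
        rw [h, Nat.mod_eq_of_lt (by omega)]
      rw [if_pos hlt, h', if_neg (by omega)]
      decide
    · have h' : (a + k).val = a.val - 2 * n := by
        rw [h, Nat.mod_eq_sub_mod (by omega), Nat.mod_eq_of_lt (by omega)]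
        omega
      rw [if_neg hlt, h', if_pos (by omega)]
      decide
  have hπval : ∀ a : ZMod (4 * n), (π a).val = a.val % (2 * n) := by
    intro a
    rw [hπ, ZMod.castHom_apply, ← ZMod.natCast_val, ZMod.val_natCast]
  have hdecomp : ∀ a : ZMod (4 * n),
      (ε a = 0 ∧ a = c (π a)) ∨ (ε a = 1 ∧ a = c (π a) + k) := by
    intro a
    have hav := a.val_lt
    have hself : ((a.val : ℕ) : ZMod (4 * n)) = a := by
      rw [ZMod.natCast_val, ZMod.cast_id]
    by_cases hlt : a.val < 2 * n
    · left
      refine ⟨by simp only [hε, if_pos hlt], ?_⟩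
      rw [hc]
      simp only
      rw [hπval, Nat.mod_eq_of_lt hlt, hself]
    · right
      refine ⟨by simp only [hε, if_neg hlt], ?_⟩
      rw [hc]
      simp only
      have hmod : a.val % (2 * n) = a.val - 2 * n := by
        rw [Nat.mod_eq_sub_mod (by omega), Nat.mod_eq_of_lt (by omega)]
      rw [hπval, hk, ← Nat.cast_add, hmod]
      have hmod2 : a.val - 2 * n + 2 * n = a.val := by omega
      rw [hmod2, hself]
  have key : ∀ a b : ZMod (4 * n),
      ε (2 * b - a) = ε a + ε (2 * c (π b) - c (π a)) := by
    intro a b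
    have h2b : 2 * b = 2 * c (π b) := by
      rcases hdecomp b with ⟨_, hb⟩ | ⟨_, hb⟩
      · rw [← hb]
      · conv_lhs => rw [hb]
        have hdist : 2 * (c (π b) + k) = 2 * c (π b) + (k + k) := by ring
        rw [hdist, hkk, add_zero]
    rcases hdecomp a with ⟨ha0, ha⟩ | ⟨ha1, ha⟩
    · conv_lhs => rw [h2b, ha]
      rw [ha0, zero_add]
    · conv_lhs => rw [h2b, ha]
      have hdist : 2 * c (π b) - (c (π a) + k) = (2 * c (π b) - c (π a)) + -k := by ring
      rw [hdist, hnegk, hflip, ha1, add_comm]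
  refine ⟨fun x y => ε (2 * c y - c x), ?_, ?_, fun a => (ε a, π a), ?_, ?_⟩
  · intro x
    have hxx : 2 * c x - c x = c x := by ring
    show ε (2 * c x - c x) = 0
    rw [hxx, hεc]
  · intro x₁ x₂ x₃
    have hπsub : ∀ u v : ZMod (4 * n), π (2 * v - u) = 2 * π v - π u := by
      intro u v
      rw [map_sub, map_mul, map_ofNat]
    have e1 := key (2 * c x₂ - c x₁) (c x₃)
    simp only [hπsub, hπc] at e1
    have e2 := key (2 * c x₃ - c x₁) (2 * c x₃ - c x₂)
    simp only [hπsub, hπc] at e2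
    have hid : 2 * c x₃ - (2 * c x₂ - c x₁)
        = 2 * (2 * c x₃ - c x₂) - (2 * c x₃ - c x₁) := by ring
    show ε (2 * c x₂ - c x₁) + ε (2 * c x₃ - c (2 * x₂ - x₁))
        = ε (2 * c x₃ - c x₁) + ε (2 * c (2 * x₃ - x₂) - c (2 * x₃ - x₁))
    rw [← e1, hid, e2]
  · rw [Fintype.bijective_iff_injective_and_card]
    constructor
    · intro a a' h
      have hε' : ε a = ε a' := congrArg Prod.fst h
      have hπ' : π a = π a' := congrArg Prod.snd h
      rcases hdecomp a with ⟨ha0, ha⟩ | ⟨ha1, ha⟩ <;>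
        rcases hdecomp a' with ⟨hb0, hb⟩ | ⟨hb1, hb⟩
      · rw [ha, hb, hπ']
      · rw [ha0, hb1] at hε'; exact absurd hε' (by decide)
      · rw [ha1, hb0] at hε'; exact absurd hε' (by decide)
      · rw [ha, hb, hπ']
    · simp only [Fintype.card_prod, ZMod.card]
      ring
  · intro a b
    show (ε (2 * b - a), π (2 * b - a))
        = (ε a + ε (2 * c (π b) - c (π a)), 2 * π b - π a)
    rw [key a b, map_sub, map_mul, map_ofNat]
end
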